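/- Let ε ∈ (0,1), m > 1, t ≥ 0, y ∈ ℝ, v > 0 with y ≠ v^α. Then ∫₀^t e^{(t-s)/ε} / (1 + e^{m(t-s)/ε}|y - v^α|^m) ds ≤ (C ε / |y - v^α|) · min{1, e^{t/ε}|y-v^α|} / (1 + |y-v^α|^{m-1}) for some constant C depending only on m. -/

import Mathlib

lemma exp_int (k t p q : ℝ) (hk : k ≠ 0) :
    ∫ s in p..q, Real.exp (k * (t - s)) =
      (Real.exp (k * (t - p)) - Real.exp (k * (t - q))) / k := by
  have key : ∀ s : ℝ, HasDerivAt (fun s => Real.exp (k * (t - s)) / (-k))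
      (Real.exp (k * (t - s))) s := by
    intro s
    have h1 : HasDerivAt (fun s : ℝ => k * (t - s)) (-k) s := by
      simpa using ((hasDerivAt_id s).const_sub t).const_mul k
    have h2 := (h1.exp).div_const (-k)
    rw [mul_div_assoc, div_self (neg_ne_zero.mpr hk), mul_one] at h2
    exact h2
  rw [intervalIntegral.integral_eq_sub_of_hasDerivAt (fun s _ => key s)
    ((Real.continuous_exp.comp (by continuity)).intervalIntegrable p q)]
  rw [← sub_div, div_neg, ← neg_div, neg_sub]

set_option maxHeartbeats 1000000 in
theorem stmt5 (m : ℝ) (hm : 1 < m) :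
    ∃ C > 0, ∀ (ε t y v α : ℝ), ε ∈ Set.Ioo (0 : ℝ) 1 → 0 ≤ t →
      α ∈ Set.Ioo (0 : ℝ) 1 → 0 < v → y ≠ v ^ α →
      ∫ s in (0 : ℝ)..t,
          Real.exp ((t - s) / ε) / (1 + Real.exp (m * (t - s) / ε) * |y - v ^ α| ^ m)
        ≤ (C * ε / |y - v ^ α|) *
            (min 1 (Real.exp (t / ε) * |y - v ^ α|) / (1 + |y - v ^ α| ^ (m - 1))) := by
  have hm0 : (0:ℝ) < m - 1 := by linarith
  have h1m : (1:ℝ) - m ≠ 0 := by linarith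
  have hm1' : (m:ℝ) - 1 ≠ 0 := by linarith
  refine ⟨2 * m / (m - 1), by positivity, ?_⟩
  intro ε t y v α hε ht hα hv hy
  obtain ⟨hε0, hε1⟩ := hε
  have hεne : ε ≠ 0 := ne_of_gt hε0
  set a : ℝ := |y - v ^ α| with ha_def
  have ha : 0 < a := abs_pos.mpr (sub_ne_zero.mpr hy)
  set f : ℝ → ℝ := fun s =>
    Real.exp ((t - s) / ε) / (1 + Real.exp (m * (t - s) / ε) * a ^ m) with hf_def
  set P : ℝ := a ^ (m - 1) with hP_def
  have hP : 0 < P := Real.rpow_pos_of_pos ha _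
  have ham : (0:ℝ) < a ^ m := Real.rpow_pos_of_pos ha _
  have hPm : a ^ m = a * P := by
    have h := Real.rpow_add ha 1 (m - 1)
    rw [Real.rpow_one] at h
    rw [hP_def, ← h]; norm_num
  set s₀ : ℝ := min t (max 0 (t + ε * Real.log a)) with hs₀_def
  have hs₀0 : 0 ≤ s₀ := le_min ht (le_max_left _ _)
  have hs₀t : s₀ ≤ t := min_le_left _ _
  -- continuity and integrability of f
  have hfc : Continuous f := by
    rw [hf_def]
    refine Continuous.div (by fun_prop) (by fun_prop) ?_
    intro s
    positivity
  have hint : ∀ p q : ℝ, IntervalIntegrable f MeasureTheory.volume p q :=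
    fun p q => hfc.intervalIntegrable p q
  set k : ℝ := (1 - m) / ε with hk_def
  have hk0 : k ≠ 0 := div_ne_zero (by linarith) hε0.ne'
  have hkneg : k < 0 := div_neg_of_neg_of_pos (by linarith) hε0
  -- pointwise bound on [0, s₀]
  have hb1 : ∀ s ∈ Set.Icc (0:ℝ) s₀, f s ≤ Real.exp (k * (t - s)) / a ^ m := by
    intro s _
    have e1 : Real.exp ((t - s) / ε) / (Real.exp (m * (t - s) / ε) * a ^ m)
        = Real.exp (k * (t - s)) / a ^ m := by
      rw [div_mul_eq_div_div, ← Real.exp_sub, hk_def]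
      congr 2
      field_simp
    calc f s ≤ Real.exp ((t - s) / ε) / (Real.exp (m * (t - s) / ε) * a ^ m) := by
          simp only [hf_def]
          gcongr
          linarith
      _ = _ := e1
  -- pointwise bound on [s₀, t]
  have hb2 : ∀ s ∈ Set.Icc s₀ t, f s ≤ Real.exp (ε⁻¹ * (t - s)) := by
    intro s _
    rw [hf_def]
    have e2 : (t - s) / ε = ε⁻¹ * (t - s) := by ring
    rw [← e2]
    exact div_le_self (Real.exp_pos _).le
      (le_add_of_nonneg_right (by positivity))
  -- abbreviations for the exponential values
  set u : ℝ := Real.exp (k * (t - s₀)) with hu_def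
  set e0 : ℝ := Real.exp (k * t) with he0_def
  set w : ℝ := Real.exp (ε⁻¹ * (t - s₀)) with hw_def
  have he0 : 0 < e0 := Real.exp_pos _
  have hu : 0 < u := Real.exp_pos _
  have hw1 : 1 ≤ w := Real.one_le_exp (mul_nonneg (by positivity) (by linarith))
  -- bound the two pieces
  have hI1 : ∫ s in (0:ℝ)..s₀, f s ≤ (e0 - u) / k / a ^ m := by
    have h1 : ∫ s in (0:ℝ)..s₀, f s
        ≤ ∫ s in (0:ℝ)..s₀, Real.exp (k * (t - s)) / a ^ m :=
      intervalIntegral.integral_mono_on hs₀0 (hint 0 s₀)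
        (Continuous.intervalIntegrable (by fun_prop) _ _) hb1
    rw [intervalIntegral.integral_div, exp_int k t 0 s₀ hk0] at h1
    rw [he0_def, hu_def]
    simpa using h1
  have hI2 : ∫ s in s₀..t, f s ≤ (w - 1) * ε := by
    have h1 : ∫ s in s₀..t, f s ≤ ∫ s in s₀..t, Real.exp (ε⁻¹ * (t - s)) :=
      intervalIntegral.integral_mono_on hs₀t (hint s₀ t)
        (Continuous.intervalIntegrable (by fun_prop) _ _) hb2
    rw [exp_int ε⁻¹ t s₀ t (by positivity)] at h1
    calc ∫ s in s₀..t, f s ≤ (Real.exp (ε⁻¹ * (t - s₀)) - Real.exp (ε⁻¹ * (t - t))) / ε⁻¹ := h1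
      _ = (w - 1) * ε := by
          rw [sub_self, mul_zero, Real.exp_zero, hw_def, div_eq_mul_inv, inv_inv]
  have hsplit : ∫ s in (0:ℝ)..t, f s ≤ (e0 - u) / k / a ^ m + (w - 1) * ε := by
    rw [← intervalIntegral.integral_add_adjacent_intervals (hint 0 s₀) (hint s₀ t)]
    exact add_le_add hI1 hI2
  clear_value f P s₀ k u e0 w a
  refine le_trans hsplit ?_
  clear hsplit hI1 hI2 hb1 hb2 hint hfc hf_def hy ha_def
  rcases le_or_gt 0 (Real.log a) with hla | hla
  · -- Case A : a ≥ 1, s₀ = t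
    have hεla : 0 ≤ ε * Real.log a := mul_nonneg hε0.le hla
    have hs : s₀ = t := by
      rw [hs₀_def, max_eq_right (by linarith : (0:ℝ) ≤ t + ε * Real.log a)]
      exact min_eq_left (by linarith)
    have hu1 : u = 1 := by rw [hu_def, hs, sub_self, mul_zero, Real.exp_zero]
    have hw' : w = 1 := by rw [hw_def, hs, sub_self, mul_zero, Real.exp_zero]
    have ha1 : 1 ≤ a := by
      rw [← Real.exp_log ha]; exact Real.one_le_exp hla
    have hP1 : 1 ≤ P := by
      rw [hP_def]; exact Real.one_le_rpow ha1 (by linarith)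
    have hmin : min 1 (Real.exp (t / ε) * a) = 1 :=
      min_eq_left (by nlinarith [Real.one_le_exp (div_nonneg ht hε0.le)])
    rw [hmin, hu1, hw', hPm]
    have hL : (e0 - 1) / k / (a * P) + (1 - 1) * ε = ((1 - e0) * ε) / ((m - 1) * (a * P)) := by
      rw [hk_def]; field_simp; ring
    have hR : 2 * m / (m - 1) * ε / a * (1 / (1 + P)) = (2 * m * ε) / ((m - 1) * (a * (1 + P))) := by
      field_simp
    rw [hL, hR, div_le_div_iff₀ (by positivity) (by positivity)]
    have hcore : (1 - e0) * (1 + P) ≤ 2 * m * P := by nlinarith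
    nlinarith [mul_le_mul_of_nonneg_right hcore (by positivity : (0:ℝ) ≤ ε * ((m - 1) * a))]
  · have ha1 : a < 1 := by
      rw [← Real.exp_log ha, ← Real.exp_zero]; exact Real.exp_lt_exp.mpr hla
    have hP1 : P ≤ 1 := by
      rw [hP_def]; exact Real.rpow_le_one ha.le ha1.le (by linarith)
    have hea : Real.exp (t / ε) * a = Real.exp (t / ε + Real.log a) := by
      rw [Real.exp_add, Real.exp_log ha]
    have hsum : t / ε + Real.log a = (t + ε * Real.log a) / ε := by
      field_simp
    rcases le_or_gt (t + ε * Real.log a) 0 with hq | hq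
    · -- Case B : s₀ = 0
      have hs : s₀ = 0 := by
        rw [hs₀_def, max_eq_left hq]
        exact min_eq_right ht
      have hu1 : u = e0 := by rw [hu_def, he0_def, hs, sub_zero]
      have hWw : Real.exp (t / ε) = w := by
        rw [hw_def, hs, sub_zero, div_eq_inv_mul]
      have hmin : min 1 (Real.exp (t / ε) * a) = Real.exp (t / ε) * a := by
        refine min_eq_right ?_
        rw [hea, ← Real.exp_zero]
        apply Real.exp_le_exp.mpr
        rw [hsum]
        exact div_nonpos_of_nonpos_of_nonneg hq hε0.le
      rw [hmin, hu1, hWw, hPm]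
      have hL : (e0 - e0) / k / (a * P) + (w - 1) * ε = (w - 1) * ε := by
        rw [sub_self, zero_div, zero_div, zero_add]
      have hR : 2 * m / (m - 1) * ε / a * (w * a / (1 + P)) = (2 * m * ε * w) / ((m - 1) * (1 + P)) := by
        field_simp
      rw [hL, hR, le_div_iff₀ (by positivity)]
      have hcore : (w - 1) * (1 + P) ≤ 2 * w := by nlinarith
      nlinarith [mul_le_mul_of_nonneg_right hcore (by positivity : (0:ℝ) ≤ ε * (m - 1)),
        mul_nonneg (mul_nonneg hε0.le (by linarith : (0:ℝ) ≤ w)) (by linarith : (0:ℝ) ≤ m - 1)]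
    · -- Case C : s₀ = t + ε * log a
      have hεla : ε * Real.log a < 0 := mul_neg_of_pos_of_neg hε0 hla
      have hs : s₀ = t + ε * Real.log a := by
        rw [hs₀_def, max_eq_right hq.le]
        exact min_eq_right (by linarith)
      have hu1 : u = P := by
        rw [hu_def, hs]
        have hkk : k * (t - (t + ε * Real.log a)) = Real.log a * (m - 1) := by
          rw [hk_def]; field_simp; ring
        rw [hkk, hP_def, Real.rpow_def_of_pos ha]
      have hw' : w = a⁻¹ := by
        rw [hw_def, hs]
        have hkk : ε⁻¹ * (t - (t + ε * Real.log a)) = -Real.log a := by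
          field_simp
          ring
        rw [hkk, Real.exp_neg, Real.exp_log ha]
      have hmin : min 1 (Real.exp (t / ε) * a) = 1 := by
        refine min_eq_left ?_
        rw [hea, ← Real.exp_zero]
        apply Real.exp_le_exp.mpr
        rw [hsum]
        positivity
      rw [hmin, hu1, hw', hPm]
      have hL : (e0 - P) / k / (a * P) + (a⁻¹ - 1) * ε
          = ((P - e0) * ε + (1 - a) * ε * ((m - 1) * P)) / ((m - 1) * (a * P)) := by
        rw [hk_def]; field_simp; ring
      have hR : 2 * m / (m - 1) * ε / a * (1 / (1 + P)) = (2 * m * ε) / ((m - 1) * (a * (1 + P))) := by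
        field_simp
      rw [hL, hR, div_le_div_iff₀ (by positivity) (by positivity)]
      have hcore : ((P - e0) + (1 - a) * ((m - 1) * P)) * (1 + P) ≤ 2 * m * P := by
        nlinarith [mul_pos he0 (by positivity : (0:ℝ) < 1 + P),
          mul_nonneg (mul_nonneg (mul_nonneg ha.le hm0.le) hP.le) (by positivity : (0:ℝ) ≤ 1 + P),
          mul_nonneg (mul_nonneg (by linarith : (0:ℝ) ≤ m) hP.le) (by linarith : (0:ℝ) ≤ 1 - P)]
      nlinarith [mul_le_mul_of_nonneg_right hcore (by positivity : (0:ℝ) ≤ ε * ((m - 1) * a))]
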